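/- #U(𝔽₅) = 100, where U(𝔽₅) = { (x₀:…:x₅) ∈ P⁵(𝔽₅) : x₀+⋯+x₅ = 0, x₀⁻¹+⋯+x₅⁻¹ = 0, all xᵢ ≠ 0 }. -/
import Mathlib

instance : Fact (Nat.Prime 5) := ⟨by norm_num⟩

/-- The open part of the Barth–Nieto quintic in `ℙ⁵(𝔽_5)`: all coordinates nonzero,
`Σ xᵢ = 0` and `Σ xᵢ⁻¹ = 0`. -/
def barthNietoU : Set (Projectivization (ZMod 5) (Fin 6 → ZMod 5)) :=
  {x | (∀ i, x.rep i ≠ 0) ∧ (∑ i, x.rep i) = 0 ∧ (∑ i, (x.rep i)⁻¹) = 0}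

section aux
set_option maxRecDepth 100000
set_option maxHeartbeats 1000000

abbrev F5 := ZMod 5

lemma inv_eq_cube (x : F5) : x⁻¹ = x ^ 3 := by
  rcases eq_or_ne x 0 with h | h
  · simp [h]
  · have h4 : x ^ 4 = 1 := ZMod.pow_card_sub_one_eq_one h
    have : x * x ^ 3 = 1 := by rw [← pow_succ']; exact h4
    exact inv_eq_of_mul_eq_one_right this

def S' : Finset (F5 × F5 × F5 × F5 × F5) :=
  Finset.univ.filter (fun p => p.1 ≠ 0 ∧ p.2.1 ≠ 0 ∧ p.2.2.1 ≠ 0 ∧ p.2.2.2.1 ≠ 0 ∧ p.2.2.2.2 ≠ 0 ∧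
    1 + p.1 + p.2.1 + p.2.2.1 + p.2.2.2.1 + p.2.2.2.2 = 0 ∧
    1 + p.1^3 + p.2.1^3 + p.2.2.1^3 + p.2.2.2.1^3 + p.2.2.2.2^3 = 0)

theorem cardS' : S'.card = 100 := by decide

lemma vec5 {α : Type*} (a b c d e f : α) : ![a,b,c,d,e,f] 5 = f := rfl

def g (p : F5 × F5 × F5 × F5 × F5) : Fin 6 → F5 :=
  ![1, p.1, p.2.1, p.2.2.1, p.2.2.2.1, p.2.2.2.2]

def T : Finset (Fin 6 → F5) := S'.image g

lemma g_inj : Function.Injective g := by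
  rintro ⟨a,b,c,d,e⟩ ⟨a',b',c',d',e'⟩ h
  have h1 := congrFun h 1
  have h2 := congrFun h 2
  have h3 := congrFun h 3
  have h4 := congrFun h 4
  have h5 := congrFun h 5
  simp [g, Matrix.cons_val_succ, vec5] at h1 h2 h3 h4 h5
  simp_all

theorem cardT : T.card = 100 := by
  rw [T, Finset.card_image_of_injective _ g_inj, cardS']

lemma mem_T {v : Fin 6 → F5} :
    v ∈ T ↔ (v 0 = 1 ∧ (∀ i, v i ≠ 0) ∧ (∑ i, v i) = 0 ∧ (∑ i, (v i)⁻¹) = 0) := by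
  constructor
  · rintro hv
    rw [T, Finset.mem_image] at hv
    obtain ⟨p, hp, rfl⟩ := hv
    simp only [S', Finset.mem_filter] at hp
    obtain ⟨-, h1, h2, h3, h4, h5, hs, hc⟩ := hp
    refine ⟨rfl, ?_, ?_, ?_⟩
    · intro i
      fin_cases i <;> simp [g, Matrix.cons_val_succ, vec5, h1, h2, h3, h4, h5]
    · rw [Fin.sum_univ_six]; simpa [g] using hs
    · rw [Fin.sum_univ_six]
      simp only [g, inv_eq_cube]
      simpa [g] using hc
  · rintro ⟨h0, hne, hs, hc⟩
    rw [T, Finset.mem_image]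
    refine ⟨(v 1, v 2, v 3, v 4, v 5), ?_, ?_⟩
    · simp only [S', Finset.mem_filter]
      refine ⟨Finset.mem_univ _, hne 1, hne 2, hne 3, hne 4, hne 5, ?_, ?_⟩
      · rw [Fin.sum_univ_six, h0] at hs; exact hs
      · rw [Fin.sum_univ_six] at hc
        simp only [inv_eq_cube] at hc
        rw [h0] at hc
        simpa using hc
    · funext i
      fin_cases i <;> simp [g, Matrix.cons_val_succ, vec5, h0.symm]

noncomputable def f (v : Fin 6 → F5) : Projectivization F5 (Fin 6 → F5) :=
  if h : v ≠ 0 then Projectivization.mk F5 v h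
  else Projectivization.mk F5 (fun _ => 1) (by
    intro h'; exact one_ne_zero (congrFun h' 0))

lemma rep_f {v : Fin 6 → F5} (h : v ≠ 0) :
    ∃ a : F5ˣ, (f v).rep = a • v := by
  rw [f, dif_pos h]
  have := (Projectivization.mk_rep (Projectivization.mk F5 v h))
  rw [Projectivization.mk_eq_mk_iff] at this
  obtain ⟨a, ha⟩ := this
  exact ⟨a, ha.symm⟩

lemma image_eq : barthNietoU = f '' ↑T := by
  ext x
  constructor
  · rintro ⟨hne, hs, hc⟩
    set c : F5 := (x.rep 0)⁻¹ with hcdef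
    have hc0 : c ≠ 0 := inv_ne_zero (hne 0)
    refine ⟨c • x.rep, ?_, ?_⟩
    · rw [Finset.mem_coe, mem_T]
      refine ⟨?_, ?_, ?_, ?_⟩
      · simp [hcdef, inv_mul_cancel₀ (hne 0)]
      · intro i; simp only [Pi.smul_apply, smul_eq_mul]
        exact mul_ne_zero hc0 (hne i)
      · simp only [Pi.smul_apply, smul_eq_mul, ← Finset.mul_sum, hs, mul_zero]
      · simp only [Pi.smul_apply, smul_eq_mul, mul_inv, ← Finset.mul_sum, hc, mul_zero]
    · have hv : c • x.rep ≠ 0 := by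
        intro h'
        have := congrFun h' 0
        simp only [Pi.smul_apply, smul_eq_mul, Pi.zero_apply] at this
        exact (mul_ne_zero hc0 (hne 0)) this
      rw [f, dif_pos hv]
      rw [show (Projectivization.mk F5 (c • x.rep) hv) =
          Projectivization.mk F5 x.rep x.rep_nonzero from ?_,
        Projectivization.mk_rep]
      rw [Projectivization.mk_eq_mk_iff]
      exact ⟨Units.mk0 c hc0, rfl⟩
  · rintro ⟨v, hv, rfl⟩
    rw [Finset.mem_coe, mem_T] at hv
    obtain ⟨h0, hne, hs, hc⟩ := hv
    have hvne : v ≠ 0 := fun h' => hne 0 (by rw [h']; rfl)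
    obtain ⟨a, ha⟩ := rep_f hvne
    refine ⟨?_, ?_, ?_⟩
    · intro i
      rw [ha]
      simp only [Pi.smul_apply, Units.smul_def, smul_eq_mul]
      exact mul_ne_zero a.ne_zero (hne i)
    · rw [ha]
      simp only [Pi.smul_apply, Units.smul_def, smul_eq_mul, ← Finset.mul_sum, hs, mul_zero]
    · rw [ha]
      simp only [Pi.smul_apply, Units.smul_def, smul_eq_mul, mul_inv, ← Finset.mul_sum, hc, mul_zero]

lemma f_injOn : Set.InjOn f ↑T := by
  intro v hv w hw hfw
  rw [Finset.mem_coe, mem_T] at hv hw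
  have hvne : v ≠ 0 := fun h' => hv.2.1 0 (by rw [h']; rfl)
  have hwne : w ≠ 0 := fun h' => hw.2.1 0 (by rw [h']; rfl)
  rw [f, dif_pos hvne, f, dif_pos hwne, Projectivization.mk_eq_mk_iff] at hfw
  obtain ⟨a, ha⟩ := hfw
  have h0 : (a : F5) * w 0 = v 0 := congrFun ha 0
  rw [hv.1, hw.1, mul_one] at h0
  have : (a : F5) = 1 := h0
  rw [← ha]
  funext i
  simp [Units.smul_def, this]

end aux

/-- `#U(𝔽_5) = 100`. -/
theorem card_barthNietoU : barthNietoU.ncard = 100 := by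
  rw [image_eq, Set.ncard_image_of_injOn f_injOn, Set.ncard_coe_finset, cardT]
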